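/- If the mixed second partial derivatives ∂²f̲/∂x_j∂x_i and ∂²f̅/∂x_j∂x_i both exist at x and the first gH-partial derivative ∂f̂/∂x_i is μ-increasing with respect to x_j near x (with ∂f̂/∂x_i(y) = [∂f̲/∂x_i(y), ∂f̅/∂x_i(y)] in a neighborhood, which holds when f̂ is μ-increasing in x_i there), then the second gH-partial derivative ∂²f̂/∂x_j∂x_i exists at x and equals [∂²f̲/∂x_j∂x_i(x), ∂²f̅/∂x_j∂x_i(x)]. -/

import Mathlib

open Filter

/-- Second gH-partial derivative: suppose on a neighborhood `U` of `x` the first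
partials `∂f̲/∂xᵢ = plo` and `∂f̅/∂xᵢ = phi` exist with `plo ≤ phi` on `U` (so that
`∂f̂/∂xᵢ = [plo, phi]` on `U`), `∂f̂/∂xᵢ` is μ-increasing with respect to `x_j` on `U`,
and the mixed second partials `∂²f̲/∂x_j∂xᵢ(x) = d2lo`, `∂²f̅/∂x_j∂xᵢ(x) = d2hi` exist.
Then the second gH-partial `∂²f̂/∂x_j∂xᵢ(x)` exists and equals `[d2lo, d2hi]`. -/
theorem gH_second_partial
    (n : ℕ) (flo fhi : (Fin n → ℝ) → ℝ) (hle : ∀ y, flo y ≤ fhi y)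
    (plo phi : (Fin n → ℝ) → ℝ) (x : Fin n → ℝ) (i j : Fin n)
    (U : Set (Fin n → ℝ)) (hU : U ∈ nhds x)
    (hplo : ∀ y ∈ U, HasDerivAt (fun t => flo (Function.update y i t)) (plo y) (y i))
    (hphi : ∀ y ∈ U, HasDerivAt (fun t => fhi (Function.update y i t)) (phi y) (y i))
    (hple : ∀ y ∈ U, plo y ≤ phi y)
    (hmono : ∀ y ∈ U, ∀ h : ℝ, 0 < h → Function.update y j (y j + h) ∈ U →
      phi y - plo y ≤
        phi (Function.update y j (y j + h)) - plo (Function.update y j (y j + h)))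
    (d2lo d2hi : ℝ)
    (hd2lo : HasDerivAt (fun t => plo (Function.update x j t)) d2lo (x j))
    (hd2hi : HasDerivAt (fun t => phi (Function.update x j t)) d2hi (x j)) :
    Tendsto (fun h : ℝ =>
        min ((plo (Function.update x j (x j + h)) - plo x) / h)
            ((phi (Function.update x j (x j + h)) - phi x) / h))
      (nhdsWithin 0 {(0:ℝ)}ᶜ) (nhds d2lo) ∧
    Tendsto (fun h : ℝ =>
        max ((plo (Function.update x j (x j + h)) - plo x) / h)
            ((phi (Function.update x j (x j + h)) - phi x) / h))
      (nhdsWithin 0 {(0:ℝ)}ᶜ) (nhds d2hi) := by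
  have hx : x ∈ U := mem_of_mem_nhds hU
  have Tlo : Tendsto (fun h : ℝ =>
      (plo (Function.update x j (x j + h)) - plo x) / h)
      (nhdsWithin 0 {(0:ℝ)}ᶜ) (nhds d2lo) := by
    have := hd2lo.tendsto_slope_zero
    simpa [Function.update_eq_self, smul_eq_mul, div_eq_inv_mul] using this
  have Thi : Tendsto (fun h : ℝ =>
      (phi (Function.update x j (x j + h)) - phi x) / h)
      (nhdsWithin 0 {(0:ℝ)}ᶜ) (nhds d2hi) := by
    have := hd2hi.tendsto_slope_zero
    simpa [Function.update_eq_self, smul_eq_mul, div_eq_inv_mul] using this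
  -- d2lo ≤ d2hi
  have hUev : ∀ᶠ h : ℝ in nhdsWithin 0 (Set.Ioi (0:ℝ)),
      Function.update x j (x j + h) ∈ U := by
    have hc : Continuous (fun h : ℝ => Function.update x j (x j + h)) :=
      continuous_const.update j (continuous_const.add continuous_id)
    have : Tendsto (fun h : ℝ => Function.update x j (x j + h)) (nhds 0) (nhds x) := by
      have := hc.tendsto 0
      simpa [Function.update_eq_self] using this
    exact nhdsWithin_le_nhds (this.eventually_mem hU)
  have hdle : d2lo ≤ d2hi := by
    have Tdiff : Tendsto (fun h : ℝ =>
        (phi (Function.update x j (x j + h)) - phi x) / h -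
        (plo (Function.update x j (x j + h)) - plo x) / h)
        (nhdsWithin 0 (Set.Ioi (0:ℝ))) (nhds (d2hi - d2lo)) :=
      (Thi.mono_left (nhdsGT_le_nhdsNE 0)).sub
        (Tlo.mono_left (nhdsGT_le_nhdsNE 0))
    have hnn : ∀ᶠ h : ℝ in nhdsWithin 0 (Set.Ioi (0:ℝ)),
        0 ≤ (phi (Function.update x j (x j + h)) - phi x) / h -
            (plo (Function.update x j (x j + h)) - plo x) / h := by
      filter_upwards [hUev, self_mem_nhdsWithin] with h hmem hpos
      have hpos' : (0:ℝ) < h := hpos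
      have key := hmono x hx h hpos' hmem
      rw [div_sub_div_same]
      exact div_nonneg (by linarith) hpos'.le
    have h0 : (0:ℝ) ≤ d2hi - d2lo := ge_of_tendsto Tdiff hnn
    linarith
  refine ⟨?_, ?_⟩
  · have := Tlo.min Thi
    rwa [min_eq_left hdle] at this
  · have := Tlo.max Thi
    rwa [max_eq_right hdle] at this
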